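/- For every integer n ≥ 0, ∫_{-1}^{0} e^{−t} t^n dt = e · ((1 + (−1)^n)/2 − {n!/e}), where {x} denotes the fractional part of x. -/

import Mathlib

open Real intervalIntegral

noncomputable def Dd : ℕ → ℤ
  | 0 => 1
  | n+1 => (n+1) * Dd n + (-1)^(n+1)

lemma contI (n : ℕ) : Continuous (fun t : ℝ => Real.exp (-t) * t ^ n) := by
  continuity

lemma intgI (n : ℕ) (a b : ℝ) :
    IntervalIntegrable (fun t : ℝ => Real.exp (-t) * t ^ n) MeasureTheory.volume a b :=
  (contI n).intervalIntegrable a b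

lemma key (n : ℕ) :
    ∫ t in (-1:ℝ)..0, Real.exp (-t) * t ^ n
      = Real.exp 1 * (Dd n : ℝ) - n.factorial := by
  induction n with
  | zero =>
    have h0 : ∫ t in (-1:ℝ)..0, Real.exp (-t) * t ^ 0
        = ∫ t in (-1:ℝ)..0, Real.exp (-t) := by simp
    have h1 := intervalIntegral.integral_comp_neg (a := (-1:ℝ)) (b := 0) (fun x => Real.exp x)
    rw [h0, h1, integral_exp]
    norm_num [Dd]
  | succ n ih =>
    have hderiv : ∀ t ∈ Set.uIcc (-1:ℝ) 0,
        HasDerivAt (fun t : ℝ => Real.exp (-t) * t ^ (n+1))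
          (((n:ℝ)+1) * (Real.exp (-t) * t ^ n) - Real.exp (-t) * t ^ (n+1)) t := by
      intro t _
      have h1 : HasDerivAt (fun t : ℝ => Real.exp (-t)) (-Real.exp (-t)) t := by
        simpa [Function.comp_def] using ((Real.hasDerivAt_exp (-t)).comp t (hasDerivAt_neg t))
      have h2 : HasDerivAt (fun t : ℝ => t ^ (n+1)) ((n+1) * t ^ n) t := by
        simpa using hasDerivAt_pow (n+1) t
      have := h1.fun_mul h2
      refine this.congr_deriv ?_
      push_cast
      ring
    have hint : IntervalIntegrable
        (fun t : ℝ => ((n:ℝ)+1) * (Real.exp (-t) * t ^ n) - Real.exp (-t) * t ^ (n+1))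
        MeasureTheory.volume (-1) 0 :=
      ((intgI n (-1) 0).const_mul _).sub (intgI (n+1) (-1) 0)
    have hFTC := intervalIntegral.integral_eq_sub_of_hasDerivAt hderiv hint
    rw [intervalIntegral.integral_sub ((intgI n (-1) 0).const_mul _) (intgI (n+1) (-1) 0),
      intervalIntegral.integral_const_mul, ih] at hFTC
    have : ∫ t in (-1:ℝ)..0, Real.exp (-t) * t ^ (n+1)
        = ((n:ℝ)+1) * (Real.exp 1 * (Dd n : ℝ) - n.factorial)
          - (Real.exp (-(0:ℝ)) * 0 ^ (n+1) - Real.exp (-(-1:ℝ)) * (-1) ^ (n+1)) := by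
      linarith [hFTC]
    rw [this]
    simp only [Dd, Nat.factorial_succ, neg_neg, neg_zero, Real.exp_zero]
    push_cast
    ring

lemma bound_pos (n : ℕ) :
    0 < (-1:ℝ)^n * ∫ t in (-1:ℝ)..0, Real.exp (-t) * t ^ n := by
  have heq : (-1:ℝ)^n * (∫ t in (-1:ℝ)..0, Real.exp (-t) * t ^ n)
      = ∫ t in (-1:ℝ)..0, Real.exp (-t) * (-t) ^ n := by
    rw [← intervalIntegral.integral_const_mul]
    apply intervalIntegral.integral_congr
    intro t _
    ring
  rw [heq]
  apply intervalIntegral.intervalIntegral_pos_of_pos_on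
  · exact (by continuity : Continuous fun t : ℝ => Real.exp (-t) * (-t)^n).intervalIntegrable _ _
  · intro x hx
    have : (0:ℝ) < -x := by linarith [hx.2]
    positivity
  · norm_num

lemma bound_lt (n : ℕ) :
    (-1:ℝ)^n * (∫ t in (-1:ℝ)..0, Real.exp (-t) * t ^ n) < Real.exp 1 := by
  have heq : (-1:ℝ)^n * (∫ t in (-1:ℝ)..0, Real.exp (-t) * t ^ n)
      = ∫ t in (-1:ℝ)..0, Real.exp (-t) * (-t) ^ n := by
    rw [← intervalIntegral.integral_const_mul]
    apply intervalIntegral.integral_congr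
    intro t _
    ring
  rw [heq]
  cases n with
  | zero =>
    simp only [pow_zero, mul_one]
    have h1 := intervalIntegral.integral_comp_neg (a := (-1:ℝ)) (b := 0) (fun x => Real.exp x)
    rw [h1, integral_exp]
    simp only [neg_neg, neg_zero, Real.exp_zero]
    linarith [Real.exp_pos (0:ℝ), Real.exp_lt_exp.2 (show (0:ℝ)<1 by norm_num)]
  | succ n =>
    have hmono : (∫ t in (-1:ℝ)..0, Real.exp (-t) * (-t) ^ (n+1))
        ≤ ∫ t in (-1:ℝ)..0, Real.exp 1 * (-t) ^ (n+1) := by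
      apply intervalIntegral.integral_mono_on (by norm_num)
      · exact (by continuity : Continuous fun t : ℝ => Real.exp (-t) * (-t)^(n+1)).intervalIntegrable _ _
      · exact (by continuity : Continuous fun t : ℝ => Real.exp 1 * (-t)^(n+1)).intervalIntegrable _ _
      · intro t ht
        have h1 : Real.exp (-t) ≤ Real.exp 1 := Real.exp_le_exp.2 (by linarith [ht.1])
        have h2 : (0:ℝ) ≤ (-t)^(n+1) := by
          have : (0:ℝ) ≤ -t := by linarith [ht.2]
          positivity
        exact mul_le_mul_of_nonneg_right h1 h2
    have hcomp : (∫ t in (-1:ℝ)..0, Real.exp 1 * (-t) ^ (n+1))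
        = Real.exp 1 / (n+2) := by
      rw [intervalIntegral.integral_const_mul]
      have h1 := intervalIntegral.integral_comp_neg (a := (-1:ℝ)) (b := 0) (fun x => x ^ (n+1))
      rw [h1]
      norm_num [integral_pow]
      ring
    have hlt : Real.exp 1 / (n+2) < Real.exp 1 := by
      have he := Real.exp_pos (1:ℝ)
      rw [div_lt_iff₀ (by positivity)]
      nlinarith
    linarith

theorem integral_neg_one_zero (n : ℕ) :
    ∫ t in (-1 : ℝ)..0, Real.exp (-t) * t ^ n =
      Real.exp 1 * ((1 + (-1 : ℝ) ^ n) / 2 - Int.fract ((n.factorial : ℝ) / Real.exp 1)) := by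
  have he := Real.exp_pos (1:ℝ)
  have hk := key n
  have hp := bound_pos n
  have hl := bound_lt n
  set I := ∫ t in (-1:ℝ)..0, Real.exp (-t) * t ^ n with hI
  have hfrac : ((n.factorial : ℝ)) / Real.exp 1 = (Dd n : ℝ) + (-(I / Real.exp 1)) := by
    field_simp
    linarith [hk]
  rw [hfrac, Int.fract_intCast_add]
  rcases Nat.even_or_odd n with h | h
  · have hpow : (-1:ℝ)^n = 1 := h.neg_one_pow
    rw [hpow] at hp hl ⊢
    rw [one_mul] at hp hl
    have hd1 : 0 < I / Real.exp 1 := div_pos hp he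
    have hd2 : I / Real.exp 1 < 1 := (div_lt_one he).2 hl
    have hflr : ⌊-(I / Real.exp 1)⌋ = -1 := by
      rw [Int.floor_eq_iff]
      constructor
      · push_cast; linarith
      · push_cast; linarith
    rw [Int.fract, hflr]
    push_cast
    field_simp
    ring
  · have hpow : (-1:ℝ)^n = -1 := h.neg_one_pow
    rw [hpow] at hp hl ⊢
    rw [neg_one_mul] at hp hl
    have hd1 : 0 < -(I / Real.exp 1) := by
      rw [neg_div'] at *
      exact div_pos hp he
    have hd2 : -(I / Real.exp 1) < 1 := by
      rw [neg_div'] at *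
      exact (div_lt_one he).2 hl
    rw [Int.fract_eq_self.2 ⟨le_of_lt hd1, hd2⟩]
    field_simp
    ring
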